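/- Let J be a cubic Jordan division algebra (char ≠ 2,3) with norm N, trace form T, adjoint ♯, and let A = M(J,1) be the associated 2×2 matrix structurable algebra with involution swapping the diagonal entries, and s = diag(1, −1) its skew element. Then every derivation D of A satisfies D(s) = 0, and there exist linear maps m, n on J such that D sends the matrix with entries (α, l; j, β) to the matrix (0, m(l); n(j), 0). Moreover if D ≠ 0 then both m ≠ 0 and n ≠ 0. -/

import Mathlib

variable {k : Type*} [Field k] {J : Type*} [AddCommGroup J] [Module k J]

/-- The multiplication of the matrix structurable algebra `M(J,1)`, on elements
`(k₁, j₁; j₂, k₂)` represented as `(k₁, j₁, j₂, k₂) : k × J × J × k`, with trace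
form `T` and Freudenthal cross product `cr`. -/
def Mmul (T : J → J → k) (cr : J → J → J) (p q : k × J × J × k) : k × J × J × k :=
  (p.1 * q.1 + T p.2.1 q.2.2.1,
   p.1 • q.2.1 + q.2.2.2 • p.2.1 + cr p.2.2.1 q.2.2.1,
   q.1 • p.2.2.1 + p.2.2.2 • q.2.2.1 + cr p.2.1 q.2.1,
   p.2.2.2 * q.2.2.2 + T p.2.2.1 q.2.1)

/-- The involution of `M(J,1)`, swapping the two diagonal scalar entries. -/
def Mbar (p : k × J × J × k) : k × J × J × k := (p.2.2.2, p.2.1, p.2.2.1, p.1)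

/-- The skew element `s = diag(1,−1)` of `M(J,1)`. -/
def Ms : k × J × J × k := ((1 : k), (0 : J), (0 : J), (-1 : k))

/-- Let `J` be a cubic Jordan division algebra (char ≠ 2,3) with norm `N`, trace
form `T`, adjoint `♯`, and let `A = M(J,1)` be the associated 2×2 matrix
structurable algebra with involution swapping the diagonal entries and
`s = diag(1,−1)` its skew element.  Then every derivation `D` of `A` satisfies
`D(s) = 0`, and there exist linear maps `m, n` on `J` such that
`D(α, l; j, β) = (0, m(l); n(j), 0)`.  Moreover if `D ≠ 0` then `m ≠ 0` and
`n ≠ 0`. -/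
theorem statement15
    (h2 : (2 : k) ≠ 0) (h3 : (3 : k) ≠ 0)
    (T : J →ₗ[k] J →ₗ[k] k) (hTsymm : ∀ x y : J, T x y = T y x)
    (cross : J →ₗ[k] J →ₗ[k] J) (hcrsymm : ∀ x y : J, cross x y = cross y x)
    (sharp : J → J) (hcross_self : ∀ j : J, cross j j = (2 : k) • sharp j)
    (N : J → k) (hN : ∀ j : J, N j = 0 ↔ j = 0)
    (hsharpsharp : ∀ j : J, sharp (sharp j) = N j • j)
    (hTsharp : ∀ j : J, T j (sharp j) = 3 * N j)
    (hdivsharp : ∀ j : J, sharp j = 0 → j = 0)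
    (D : (k × J × J × k) →ₗ[k] (k × J × J × k))
    (hleib : ∀ p q : k × J × J × k,
      D (Mmul (fun x y => T x y) (fun x y => cross x y) p q)
        = Mmul (fun x y => T x y) (fun x y => cross x y) (D p) q
          + Mmul (fun x y => T x y) (fun x y => cross x y) p (D q))
    (hbar : ∀ p : k × J × J × k, D (Mbar p) = Mbar (D p)) :
    D Ms = 0
      ∧ ∃ m n : J →ₗ[k] J,
          (∀ (α β : k) (l j : J), D (α, l, j, β) = (0, m l, n j, 0))
          ∧ (D ≠ 0 → m ≠ 0 ∧ n ≠ 0) := by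
  classical
  set mul : (k × J × J × k) → (k × J × J × k) → (k × J × J × k) :=
    Mmul (fun x y => T x y) (fun x y => cross x y) with hmulDef
  have mul_def : ∀ p q : k × J × J × k, mul p q =
      (p.1 * q.1 + T p.2.1 q.2.2.1,
       p.1 • q.2.1 + q.2.2.2 • p.2.1 + cross p.2.2.1 q.2.2.1,
       q.1 • p.2.2.1 + p.2.2.2 • q.2.2.1 + cross p.2.1 q.2.1,
       p.2.2.2 * q.2.2.2 + T p.2.2.1 q.2.1) := by
    intro p q; rw [hmulDef]; rfl
  have h2' : ((2:k))⁻¹ * 2 = 1 := inv_mul_cancel₀ h2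
  have halfJ : ∀ x : J, x + x = 0 → x = 0 := by
    intro x hx
    have h2x : (2:k) • x = 0 := by rw [two_smul]; exact hx
    calc x = (2:k)⁻¹ • ((2:k) • x) := by rw [smul_smul, h2', one_smul]
    _ = 0 := by rw [h2x, smul_zero]
  have halfk : ∀ x : k, x + x = 0 → x = 0 := by
    intro x hx
    have : (2:k) * x = 0 := by rw [two_mul]; exact hx
    exact (mul_eq_zero.mp this).resolve_left h2
  have hmul0l : ∀ q : k × J × J × k, mul 0 q = 0 := by
    intro q; simp [mul_def, Prod.ext_iff]
  have hmul0r : ∀ p : k × J × J × k, mul p 0 = 0 := by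
    intro p; simp [mul_def, Prod.ext_iff]
  -- the identity element
  have hre : ∀ p, mul p ((1:k),(0:J),(0:J),(1:k)) = p := by
    intro p; simp [mul_def]
  have hle : ∀ p, mul ((1:k),(0:J),(0:J),(1:k)) p = p := by
    intro p; simp [mul_def]
  have he : D ((1:k), (0:J), (0:J), (1:k)) = 0 := by
    have h := hleib ((1:k),(0:J),(0:J),(1:k)) ((1:k),(0:J),(0:J),(1:k))
    rw [hle, hre, hle] at h
    exact left_eq_add.mp h
  -- D s is skew
  have hsskew := hbar Ms
  have hnegMs : Mbar (Ms : k × J × J × k) = -Ms := by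
    simp [Mbar, Ms, Prod.ext_iff]
  rw [hnegMs, map_neg] at hsskew
  have hx : (D Ms).2.1 = 0 := by
    have h := congrArg (fun p : k × J × J × k => p.2.1) hsskew
    simp only [Mbar] at h
    exact halfJ _ (neg_eq_iff_add_eq_zero.mp h)
  have hy : (D Ms).2.2.1 = 0 := by
    have h := congrArg (fun p : k × J × J × k => p.2.2.1) hsskew
    simp only [Mbar] at h
    exact halfJ _ (neg_eq_iff_add_eq_zero.mp h)
  have hss : mul Ms Ms = ((1:k),(0:J),(0:J),(1:k)) := by
    simp [mul_def, Ms]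
  have hDs : D Ms = 0 := by
    have h := hleib Ms Ms
    rw [hss, he] at h
    have h1 := congrArg (fun p : k × J × J × k => p.1) h
    have h4 := congrArg (fun p : k × J × J × k => p.2.2.2) h
    simp only [mul_def, Ms] at h1 h4
    simp at h1 h4
    have ha : (D Ms).1 = 0 := halfk _ h1.symm
    have hb : (D Ms).2.2.2 = 0 := neg_eq_zero.mp (halfk _ h4.symm)
    have : D Ms = ((D Ms).1, (D Ms).2.1, (D Ms).2.2.1, (D Ms).2.2.2) := rfl
    rw [this, ha, hb, hx, hy]; rfl
  -- D kills the two diagonal idempotents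
  have he1 : D ((1:k),(0:J),(0:J),(0:k)) = 0 := by
    have hsum : (((1:k),(0:J),(0:J),(1:k)) : k × J × J × k) + Ms
        = ((2:k),(0:J),(0:J),(0:k)) := by
      norm_num [Ms, Prod.ext_iff]
    have hdec : (((1:k),(0:J),(0:J),(0:k)) : k × J × J × k)
        = (2:k)⁻¹ • (((2:k),(0:J),(0:J),(0:k)) : k × J × J × k) := by
      simp [Prod.ext_iff, smul_eq_mul, h2']
    rw [hdec, ← hsum, map_smul, map_add, he, hDs, add_zero, smul_zero]
  have he2 : D ((0:k),(0:J),(0:J),(1:k)) = 0 := by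
    have hsum : (((1:k),(0:J),(0:J),(1:k)) : k × J × J × k) - Ms
        = ((0:k),(0:J),(0:J),(2:k)) := by
      norm_num [Ms, Prod.ext_iff]
    have hdec : (((0:k),(0:J),(0:J),(1:k)) : k × J × J × k)
        = (2:k)⁻¹ • (((0:k),(0:J),(0:J),(2:k)) : k × J × J × k) := by
      simp [Prod.ext_iff, smul_eq_mul, h2']
    rw [hdec, ← hsum, map_smul, map_sub, he, hDs, sub_zero, smul_zero]
  -- structure of D on off-diagonal elements
  have hDl : ∀ l : J, D ((0:k), l, (0:J), (0:k))
      = (0, (D ((0:k), l, (0:J), (0:k))).2.1, 0, 0) := by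
    intro l
    have h1 := hleib ((1:k),(0:J),(0:J),(0:k)) ((0:k), l, (0:J), (0:k))
    have hp : mul ((1:k),(0:J),(0:J),(0:k)) ((0:k), l, (0:J), (0:k))
        = ((0:k), l, (0:J), (0:k)) := by simp [mul_def]
    rw [hp, he1, hmul0l, zero_add] at h1
    have h3 := congrArg (fun p : k × J × J × k => p.2.2.1) h1
    have h4 := congrArg (fun p : k × J × J × k => p.2.2.2) h1
    simp only [mul_def] at h3 h4
    simp at h3 h4
    have h2a := hleib ((0:k), l, (0:J), (0:k)) ((0:k),(0:J),(0:J),(1:k))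
    have hq : mul ((0:k), l, (0:J), (0:k)) ((0:k),(0:J),(0:J),(1:k))
        = ((0:k), l, (0:J), (0:k)) := by simp [mul_def]
    rw [hq, he2, hmul0r, add_zero] at h2a
    have h5 := congrArg (fun p : k × J × J × k => p.1) h2a
    simp only [mul_def] at h5
    simp at h5
    simp only [Prod.ext_iff]
    exact ⟨h5, trivial, h3, h4⟩
  have hDj : ∀ j : J, D ((0:k), (0:J), j, (0:k))
      = (0, 0, (D ((0:k), (0:J), j, (0:k))).2.2.1, 0) := by
    intro j
    have h1 := hleib ((0:k),(0:J),(0:J),(1:k)) ((0:k), (0:J), j, (0:k))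
    have hp : mul ((0:k),(0:J),(0:J),(1:k)) ((0:k), (0:J), j, (0:k))
        = ((0:k), (0:J), j, (0:k)) := by simp [mul_def]
    rw [hp, he2, hmul0l, zero_add] at h1
    have h3 := congrArg (fun p : k × J × J × k => p.2.1) h1
    have h4 := congrArg (fun p : k × J × J × k => p.1) h1
    simp only [mul_def] at h3 h4
    simp at h3 h4
    have h2a := hleib ((0:k), (0:J), j, (0:k)) ((1:k),(0:J),(0:J),(0:k))
    have hq : mul ((0:k), (0:J), j, (0:k)) ((1:k),(0:J),(0:J),(0:k))
        = ((0:k), (0:J), j, (0:k)) := by simp [mul_def]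
    rw [hq, he1, hmul0r, add_zero] at h2a
    have h5 := congrArg (fun p : k × J × J × k => p.2.2.2) h2a
    simp only [mul_def] at h5
    simp at h5
    simp only [Prod.ext_iff]
    exact ⟨h4, h3, trivial, h5⟩
  -- the linear maps m and n
  set m : J →ₗ[k] J :=
    { toFun := fun l => (D ((0:k), l, (0:J), (0:k))).2.1
      map_add' := by
        intro x y
        have : ((0:k), x + y, (0:J), (0:k))
            = ((0:k), x, (0:J), (0:k)) + ((0:k), y, (0:J), (0:k)) := by
          simp [Prod.ext_iff]
        rw [this, map_add]; rfl
      map_smul' := by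
        intro c x
        have : ((0:k), c • x, (0:J), (0:k)) = c • ((0:k), x, (0:J), (0:k)) := by
          simp [Prod.ext_iff]
        rw [this, map_smul]
        rfl } with hmdef
  set n : J →ₗ[k] J :=
    { toFun := fun j => (D ((0:k), (0:J), j, (0:k))).2.2.1
      map_add' := by
        intro x y
        have : ((0:k), (0:J), x + y, (0:k))
            = ((0:k), (0:J), x, (0:k)) + ((0:k), (0:J), y, (0:k)) := by
          simp [Prod.ext_iff]
        rw [this, map_add]; rfl
      map_smul' := by
        intro c x
        have : ((0:k), (0:J), c • x, (0:k)) = c • ((0:k), (0:J), x, (0:k)) := by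
          simp [Prod.ext_iff]
        rw [this, map_smul]
        rfl } with hndef
  have hm_apply : ∀ l : J, m l = (D ((0:k), l, (0:J), (0:k))).2.1 := fun _ => rfl
  have hn_apply : ∀ j : J, n j = (D ((0:k), (0:J), j, (0:k))).2.2.1 := fun _ => rfl
  -- the main formula
  have hmain : ∀ (α β : k) (l j : J), D (α, l, j, β) = (0, m l, n j, 0) := by
    intro α β l j
    have hdecomp : ((α, l, j, β) : k × J × J × k)
        = α • ((1:k),(0:J),(0:J),(0:k)) + ((0:k), l, (0:J), (0:k))
          + ((0:k), (0:J), j, (0:k)) + β • ((0:k),(0:J),(0:J),(1:k)) := by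
      simp [Prod.ext_iff]
    rw [hdecomp, map_add, map_add, map_add, map_smul, map_smul, he1, he2,
      smul_zero, smul_zero, zero_add, add_zero, hDl l, hDj j]
    rw [hm_apply, hn_apply]
    simp [Prod.ext_iff]
  -- vanishing of m forces vanishing of n, and conversely
  have hmn : m = 0 → n = 0 := by
    intro hm
    have hcr : ∀ x y : J, n (cross x y) = 0 := by
      intro x y
      have h := hleib ((0:k), x, (0:J), (0:k)) ((0:k), y, (0:J), (0:k))
      have hpq : mul ((0:k), x, (0:J), (0:k)) ((0:k), y, (0:J), (0:k))
          = ((0:k), (0:J), cross x y, (0:k)) := by simp [mul_def]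
      have hx0 : (D ((0:k), x, (0:J), (0:k))).2.1 = 0 := by
        rw [← hm_apply, hm]; rfl
      have hy0 : (D ((0:k), y, (0:J), (0:k))).2.1 = 0 := by
        rw [← hm_apply, hm]; rfl
      rw [hpq, hDl x, hDl y, hx0, hy0] at h
      rw [show ((0:k), (0:J), (0:J), (0:k)) = (0 : k × J × J × k) from rfl,
        hmul0l, hmul0r, add_zero] at h
      rw [hn_apply, h]; rfl
    have hsharp0 : ∀ x : J, n (sharp x) = 0 := by
      intro x
      have h := hcr x x
      rw [hcross_self, map_smul, two_smul] at h
      exact halfJ _ h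
    apply LinearMap.ext; intro j
    rcases eq_or_ne j 0 with rfl | hj
    · simp
    · have hNj : N j ≠ 0 := fun h => hj ((hN j).mp h)
      have hjdec : j = (N j)⁻¹ • sharp (sharp j) := by
        rw [hsharpsharp, smul_smul, inv_mul_cancel₀ hNj, one_smul]
      simp only [LinearMap.zero_apply]
      calc n j = (N j)⁻¹ • n (sharp (sharp j)) := by rw [← map_smul, ← hjdec]
      _ = 0 := by rw [hsharp0, smul_zero]
  have hnm : n = 0 → m = 0 := by
    intro hn
    have hcr : ∀ x y : J, m (cross x y) = 0 := by
      intro x y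
      have h := hleib ((0:k), (0:J), x, (0:k)) ((0:k), (0:J), y, (0:k))
      have hpq : mul ((0:k), (0:J), x, (0:k)) ((0:k), (0:J), y, (0:k))
          = ((0:k), cross x y, (0:J), (0:k)) := by simp [mul_def]
      have hx0 : (D ((0:k), (0:J), x, (0:k))).2.2.1 = 0 := by
        rw [← hn_apply, hn]; rfl
      have hy0 : (D ((0:k), (0:J), y, (0:k))).2.2.1 = 0 := by
        rw [← hn_apply, hn]; rfl
      rw [hpq, hDj x, hDj y, hx0, hy0] at h
      rw [show ((0:k), (0:J), (0:J), (0:k)) = (0 : k × J × J × k) from rfl,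
        hmul0l, hmul0r, add_zero] at h
      rw [hm_apply, h]; rfl
    have hsharp0 : ∀ x : J, m (sharp x) = 0 := by
      intro x
      have h := hcr x x
      rw [hcross_self, map_smul, two_smul] at h
      exact halfJ _ h
    apply LinearMap.ext; intro l
    rcases eq_or_ne l 0 with rfl | hl
    · simp
    · have hNl : N l ≠ 0 := fun h => hl ((hN l).mp h)
      have hldec : l = (N l)⁻¹ • sharp (sharp l) := by
        rw [hsharpsharp, smul_smul, inv_mul_cancel₀ hNl, one_smul]
      simp only [LinearMap.zero_apply]
      calc m l = (N l)⁻¹ • m (sharp (sharp l)) := by rw [← map_smul, ← hldec]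
      _ = 0 := by rw [hsharp0, smul_zero]
  have hD0 : m = 0 → n = 0 → D = 0 := by
    intro hm hn
    apply LinearMap.ext; intro p
    have h := hmain p.1 p.2.2.2 p.2.1 p.2.2.1
    rw [show ((p.1, p.2.1, p.2.2.1, p.2.2.2) : k × J × J × k) = p from rfl] at h
    rw [hm, hn] at h
    simp at h ⊢
    exact h
  refine ⟨hDs, m, n, hmain, fun hD => ⟨?_, ?_⟩⟩
  · intro hm; exact hD (hD0 hm (hmn hm))
  · intro hn; exact hD (hD0 (hnm hn) hn)
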